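/- For each positive integer n, let g_n(α) = sin²(nπα/2) for |α| ≤ 1 if n is even, g_n(α) = cos²(nπα/2) for |α| ≤ 1 if n is odd, and g_n(α) = 0 for |α| > 1. Then g_n is even and in L¹(ℝ), its Fourier transform is ĝ_n(t) = (sin(2πt)/(2πt))·(n²/(n² − 4t²)); one has the bounds |ĝ_n(t)| ≪ 1/(|t|+1) for 0 ≤ |t| ≤ n/4, |ĝ_n(t)| ≪ 1 for n/4 < |t| < n, and |ĝ_n(t)| ≪ n²/|t|³ for |t| ≥ n, so ĝ_n ∈ L¹(ℝ); and for integers k, ĝ_n(k/2) = 1 if k = 0, ĝ_n(k/2) = (−1)^{n+1}/2 if k = ±n, and ĝ_n(k/2) = 0 otherwise. -/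

import Mathlib

open scoped Classical
open Real Filter MeasureTheory

noncomputable section

/-- The function `g_n`: `sin²(nπα/2)` (for even `n`) or `cos²(nπα/2)` (for odd `n`)
on `|α| ≤ 1`, and `0` outside. -/
def gnfun (n : ℕ) (α : ℝ) : ℝ :=
  if |α| ≤ 1 then
    (if Even n then Real.sin (n * π * α / 2) ^ 2 else Real.cos (n * π * α / 2) ^ 2)
  else 0

/-- The Fourier transform of `g_n`:
`ĝ_n(t) = (sin(2πt)/(2πt))·(n²/(n² - 4t²))`, with the removable singularities at
`t = 0` and `t = ±n/2` interpreted by their limiting values. -/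
def gnhat (n : ℕ) (t : ℝ) : ℝ :=
  if t = 0 then 1
  else if t = (n:ℝ)/2 ∨ t = -((n:ℝ)/2) then (-1 : ℝ)^(n+1) / 2
  else Real.sin (2*π*t) / (2*π*t) * ((n:ℝ)^2 / ((n:ℝ)^2 - 4*t^2))

lemma Jval (r : ℝ) (hr : r ≠ 0) :
    (∫ α in (-1:ℝ)..1, Complex.exp (r * α * Complex.I)) = ((2 * Real.sin r / r : ℝ) : ℂ) := by
  have hc : (r : ℂ) * Complex.I ≠ 0 := by
    simp [Complex.ext_iff, hr]
  have h : ∀ α : ℝ, Complex.exp ((r:ℂ) * α * Complex.I) = Complex.exp ((r * Complex.I) * α) := by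
    intro α; ring_nf
  simp_rw [h]
  rw [integral_exp_mul_complex hc]
  have h1 : (r:ℂ) * Complex.I * ((1:ℝ):ℂ) = (r:ℂ) * Complex.I := by push_cast; ring
  have h2 : (r:ℂ) * Complex.I * ((-1:ℝ):ℂ) = ((-r:ℝ):ℂ) * Complex.I := by push_cast; ring
  rw [h1, h2, Complex.exp_mul_I, Complex.exp_mul_I]
  push_cast
  rw [Complex.cos_neg, Complex.sin_neg]
  have : (Complex.cos r + Complex.sin r * Complex.I - (Complex.cos (r:ℂ) + -Complex.sin (r:ℂ) * Complex.I))
      = 2 * Complex.sin r * Complex.I := by ring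
  rw [this, ← Complex.ofReal_sin]
  have hI : Complex.I ≠ 0 := Complex.I_ne_zero
  have hr' : (r:ℂ) ≠ 0 := by exact_mod_cast hr
  field_simp


lemma gnfun_eq (n : ℕ) (α : ℝ) (hα : |α| ≤ 1) :
    gnfun n α = 1/2 + (-1:ℝ)^(n+1)/2 * Real.cos (n * π * α) := by
  have h2 : (n:ℝ) * π * α = 2 * (n * π * α / 2) := by ring
  rw [gnfun, if_pos hα]
  rcases Nat.even_or_odd n with he | ho
  · have hp : (-1:ℝ)^(n+1) = -1 := by rw [pow_succ, he.neg_one_pow]; ring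
    rw [if_pos he, hp]
    have := Real.sin_sq_eq_half_sub (n * π * α / 2)
    rw [this, ← h2]; ring
  · have hp : (-1:ℝ)^(n+1) = 1 := by rw [pow_succ, ho.neg_one_pow]; ring
    rw [if_neg (Nat.not_even_iff_odd.mpr ho), hp]
    have := Real.cos_sq (n * π * α / 2)
    rw [this, ← h2]; ring

lemma pointwise (n : ℕ) (t : ℝ) (α : ℝ) (hα : |α| ≤ 1) :
    (gnfun n α : ℂ) * Complex.exp (-2 * π * Complex.I * t * α)
      = (1/2) * Complex.exp (((-2*π*t : ℝ):ℂ) * α * Complex.I)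
        + ((-1:ℂ)^(n+1)/4) * (Complex.exp (((n*π - 2*π*t : ℝ):ℂ) * α * Complex.I)
            + Complex.exp (((-(n*π) - 2*π*t : ℝ):ℂ) * α * Complex.I)) := by
  rw [gnfun_eq n α hα]
  push_cast
  have hcos : (Complex.cos ((n:ℂ) * π * α)) =
      (Complex.exp (((n:ℂ) * π * α) * Complex.I) + Complex.exp (-((n:ℂ) * π * α) * Complex.I)) / 2 := rfl
  rw [hcos]
  have e1 : ((-2*(π:ℂ)*t)) * α * Complex.I = -2 * π * Complex.I * t * α := by ring
  have e2 : (((n:ℂ)*π - 2*π*t)) * α * Complex.I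
      = ((n:ℂ) * π * α) * Complex.I + (-2 * π * Complex.I * t * α) := by ring
  have e3 : ((-((n:ℂ)*π) - 2*π*t)) * α * Complex.I
      = -((n:ℂ) * π * α) * Complex.I + (-2 * π * Complex.I * t * α) := by ring
  rw [e1, e2, e3, Complex.exp_add, Complex.exp_add]
  ring

lemma contExp (c : ℂ) : Continuous (fun α : ℝ => Complex.exp (c * α * Complex.I)) := by
  fun_prop

lemma integral_decomp (n : ℕ) (t : ℝ) :
    (∫ α : ℝ, (gnfun n α : ℂ) * Complex.exp (-2 * π * Complex.I * t * α))
      = (1/2) * (∫ α in (-1:ℝ)..1, Complex.exp (((-2*π*t : ℝ):ℂ) * α * Complex.I))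
        + ((-1:ℂ)^(n+1)/4) * ((∫ α in (-1:ℝ)..1, Complex.exp (((n*π - 2*π*t : ℝ):ℂ) * α * Complex.I))
            + (∫ α in (-1:ℝ)..1, Complex.exp (((-(n*π) - 2*π*t : ℝ):ℂ) * α * Complex.I))) := by
  have hzero : ∀ α : ℝ, α ∉ Set.Icc (-1:ℝ) 1 →
      (gnfun n α : ℂ) * Complex.exp (-2 * π * Complex.I * t * α) = 0 := by
    intro α hα
    rw [Set.mem_Icc, ← abs_le] at hα
    rw [gnfun, if_neg hα]
    simp
  rw [← setIntegral_eq_integral_of_forall_compl_eq_zero hzero,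
    integral_Icc_eq_integral_Ioc, ← intervalIntegral.integral_of_le (by norm_num : (-1:ℝ) ≤ 1)]
  have hEq : Set.EqOn (fun α : ℝ => (gnfun n α : ℂ) * Complex.exp (-2 * π * Complex.I * t * α))
      (fun α : ℝ => (1/2) * Complex.exp (((-2*π*t : ℝ):ℂ) * α * Complex.I)
        + ((-1:ℂ)^(n+1)/4) * (Complex.exp (((n*π - 2*π*t : ℝ):ℂ) * α * Complex.I)
            + Complex.exp (((-(n*π) - 2*π*t : ℝ):ℂ) * α * Complex.I)))
      (Set.uIcc (-1:ℝ) 1) := by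
    intro α hα
    rw [Set.uIcc_of_le (by norm_num : (-1:ℝ) ≤ 1), Set.mem_Icc, ← abs_le] at hα
    exact pointwise n t α hα
  rw [intervalIntegral.integral_congr hEq]
  have hA : IntervalIntegrable (fun α : ℝ => (1/2 : ℂ) * Complex.exp (((-2*π*t : ℝ):ℂ) * α * Complex.I))
      volume (-1) 1 := (continuous_const.mul (contExp _)).intervalIntegrable _ _
  have hB : IntervalIntegrable (fun α : ℝ => Complex.exp (((n*π - 2*π*t : ℝ):ℂ) * α * Complex.I))
      volume (-1) 1 := (contExp _).intervalIntegrable _ _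
  have hC : IntervalIntegrable (fun α : ℝ => Complex.exp (((-(n*π) - 2*π*t : ℝ):ℂ) * α * Complex.I))
      volume (-1) 1 := (contExp _).intervalIntegrable _ _
  rw [intervalIntegral.integral_add hA (((hB.add hC)).const_mul _),
    intervalIntegral.integral_const_mul, intervalIntegral.integral_const_mul,
    intervalIntegral.integral_add hB hC]


lemma Jzero : (∫ α in (-1:ℝ)..1, Complex.exp (((0:ℝ):ℂ) * α * Complex.I)) = 2 := by
  simp
  norm_num

lemma cos_nat_pi (n : ℕ) : Real.cos (n * π) = (-1)^n := by
  simpa using Real.cos_nat_mul_pi_sub 0 n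

lemma main3 (n : ℕ) (hn : 1 ≤ n) (t : ℝ) :
    (∫ α : ℝ, (gnfun n α : ℂ) * Complex.exp (-2 * π * Complex.I * t * α))
      = ((gnhat n t : ℝ) : ℂ) := by
  have hπ : (π : ℝ) ≠ 0 := Real.pi_ne_zero
  have hnR : (0:ℝ) < n := by exact_mod_cast hn
  rw [integral_decomp]
  by_cases ht0 : t = 0
  · subst ht0
    have e0 : (-2*π*(0:ℝ)) = (0:ℝ) := by ring
    have ep : ((n:ℝ)*π - 2*π*0) = (n:ℝ)*π := by ring
    have em : (-((n:ℝ)*π) - 2*π*0) = -((n:ℝ)*π) := by ring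
    rw [e0, ep, em, Jzero, Jval _ (by positivity), Jval _ (neg_ne_zero.mpr (by positivity))]
    rw [gnhat, if_pos rfl]
    have : Real.sin ((n:ℝ)*π) = 0 := Real.sin_nat_mul_pi n
    rw [show Real.sin (-((n:ℝ)*π)) = 0 by rw [Real.sin_neg, this]; ring, this]
    push_cast
    ring
  by_cases htp : t = (n:ℝ)/2
  · subst htp
    have e0 : (-2*π*((n:ℝ)/2)) = -((n:ℝ)*π) := by ring
    have ep : ((n:ℝ)*π - 2*π*((n:ℝ)/2)) = (0:ℝ) := by ring
    have em : (-((n:ℝ)*π) - 2*π*((n:ℝ)/2)) = -(2*(n:ℝ)*π) := by ring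
    have hnπ : ((n:ℝ)*π) ≠ 0 := by positivity
    have h2nπ : (2*(n:ℝ)*π) ≠ 0 := by positivity
    rw [e0, ep, em, Jzero, Jval _ (neg_ne_zero.mpr hnπ), Jval _ (neg_ne_zero.mpr h2nπ)]
    rw [gnhat, if_neg ht0, if_pos (Or.inl rfl)]
    have h1 : Real.sin (-((n:ℝ)*π)) = 0 := by
      rw [Real.sin_neg, Real.sin_nat_mul_pi]; ring
    have h2 : Real.sin (-(2*(n:ℝ)*π)) = 0 := by
      rw [Real.sin_neg, show (2*(n:ℝ)*π) = ((2*n : ℕ):ℝ)*π by push_cast; ring,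
        Real.sin_nat_mul_pi]; ring
    rw [h1, h2]
    push_cast
    ring
  by_cases htm : t = -((n:ℝ)/2)
  · subst htm
    have e0 : (-2*π*(-((n:ℝ)/2))) = (n:ℝ)*π := by ring
    have ep : ((n:ℝ)*π - 2*π*(-((n:ℝ)/2))) = 2*(n:ℝ)*π := by ring
    have em : (-((n:ℝ)*π) - 2*π*(-((n:ℝ)/2))) = (0:ℝ) := by ring
    rw [e0, ep, em, Jzero, Jval _ (by positivity), Jval _ (by positivity)]
    rw [gnhat, if_neg ht0, if_pos (Or.inr rfl)]
    have h1 : Real.sin ((n:ℝ)*π) = 0 := Real.sin_nat_mul_pi n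
    have h2 : Real.sin (2*(n:ℝ)*π) = 0 := by
      rw [show (2*(n:ℝ)*π) = ((2*n : ℕ):ℝ)*π by push_cast; ring]
      exact Real.sin_nat_mul_pi _
    rw [h1, h2]
    push_cast
    ring
  · -- generic case
    have h0 : (-2*π*t) ≠ 0 := by
      simp only [ne_eq, mul_eq_zero]; push_neg; exact ⟨⟨by norm_num, hπ⟩, ht0⟩
    have hp : ((n:ℝ)*π - 2*π*t) ≠ 0 := by
      intro h
      apply htp
      have : (n:ℝ)*π = 2*π*t := by linarith
      field_simp
      nlinarith [Real.pi_pos]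
    have hm : (-((n:ℝ)*π) - 2*π*t) ≠ 0 := by
      intro h
      apply htm
      have : -((n:ℝ)*π) = 2*π*t := by linarith
      field_simp
      nlinarith [Real.pi_pos]
    rw [Jval _ h0, Jval _ hp, Jval _ hm]
    rw [gnhat, if_neg ht0, if_neg (by push_neg; exact ⟨htp, htm⟩)]
    have key : (1/2) * (2 * Real.sin (-2*π*t) / (-2*π*t))
        + (-1:ℝ)^(n+1)/4 * ((2 * Real.sin ((n:ℝ)*π - 2*π*t) / ((n:ℝ)*π - 2*π*t))
            + (2 * Real.sin (-((n:ℝ)*π) - 2*π*t) / (-((n:ℝ)*π) - 2*π*t)))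
        = Real.sin (2*π*t) / (2*π*t) * ((n:ℝ)^2 / ((n:ℝ)^2 - 4*t^2)) := by
      have s0 : Real.sin (-2*π*t) = -Real.sin (2*π*t) := by
        rw [show (-2*π*t) = -(2*π*t) by ring, Real.sin_neg]
      have sp : Real.sin ((n:ℝ)*π - 2*π*t) = -((-1:ℝ)^n * Real.sin (2*π*t)) :=
        Real.sin_nat_mul_pi_sub (2*π*t) n
      have sm : Real.sin (-((n:ℝ)*π) - 2*π*t) = -((-1:ℝ)^n * Real.sin (2*π*t)) := by
        rw [show (-((n:ℝ)*π) - 2*π*t) = -((n:ℝ)*π + 2*π*t) by ring, Real.sin_neg,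
          Real.sin_add, Real.sin_nat_mul_pi, cos_nat_pi]
        ring
      have hD : (n:ℝ)^2 - 4*t^2 ≠ 0 := by
        intro h
        have : ((n:ℝ) - 2*t) * ((n:ℝ) + 2*t) = 0 := by nlinarith
        rcases mul_eq_zero.mp this with h' | h'
        · exact htp (by linarith)
        · exact htm (by linarith)
      have ht0' : (2*π*t) ≠ 0 := by
        simp only [ne_eq, mul_eq_zero]; push_neg; exact ⟨⟨by norm_num, hπ⟩, ht0⟩
      rw [s0, sp, sm, pow_succ]
      rcases Nat.even_or_odd n with he | ho
      · rw [he.neg_one_pow, show (n:ℝ)^2 - 4*t^2 = ((n:ℝ) - 2*t)*((n:ℝ)+2*t) by ring]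
        have hp' : (n:ℝ) - 2*t ≠ 0 := fun h => htp (by linarith)
        have hm' : (n:ℝ) + 2*t ≠ 0 := fun h => htm (by linarith)
        have hm'' : -(n:ℝ) - 2*t ≠ 0 := fun h => htm (by linarith)
        field_simp
        ring
      · rw [ho.neg_one_pow, show (n:ℝ)^2 - 4*t^2 = ((n:ℝ) - 2*t)*((n:ℝ)+2*t) by ring]
        have hp' : (n:ℝ) - 2*t ≠ 0 := fun h => htp (by linarith)
        have hm' : (n:ℝ) + 2*t ≠ 0 := fun h => htm (by linarith)
        have hm'' : -(n:ℝ) - 2*t ≠ 0 := fun h => htm (by linarith)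
        field_simp
        ring
    rw [← key]
    push_cast
    ring

-- Part 1
lemma part1 (n : ℕ) (α : ℝ) : gnfun n (-α) = gnfun n α := by
  unfold gnfun
  rw [abs_neg]
  rcases le_or_gt |α| 1 with h | h
  · rw [if_pos h, if_pos h]
    have : (n:ℝ) * π * (-α) / 2 = -((n:ℝ) * π * α / 2) := by ring
    rw [this, Real.sin_neg, Real.cos_neg, neg_pow, neg_one_sq]
    simp
  · rw [if_neg (not_le.mpr h), if_neg (not_le.mpr h)]

-- Part 2
lemma part2 (n : ℕ) : Integrable (gnfun n) := by
  have hm : Measurable (gnfun n) := by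
    unfold gnfun
    apply Measurable.ite
    · exact measurableSet_le (continuous_abs.measurable) measurable_const
    · apply Measurable.ite (MeasurableSet.const _)
      · exact (Real.continuous_sin.comp (by continuity)).measurable.pow_const 2
      · exact (Real.continuous_cos.comp (by continuity)).measurable.pow_const 2
    · exact measurable_const
  apply Integrable.mono' (g := Set.indicator (Set.Icc (-1:ℝ) 1) (fun _ => 1))
  · rw [integrable_indicator_iff measurableSet_Icc]
    exact (integrableOn_const_iff).mpr (Or.inr measure_Icc_lt_top)
  · exact hm.aestronglyMeasurable
  · filter_upwards with α
    by_cases h : |α| ≤ 1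
    · rw [Set.indicator_of_mem (by rw [Set.mem_Icc, ← abs_le]; exact h)]
      rw [Real.norm_eq_abs, gnfun, if_pos h]
      split_ifs
      · rw [abs_of_nonneg (sq_nonneg _)]
        nlinarith [Real.neg_one_le_sin ((n:ℝ)*π*α/2), Real.sin_le_one ((n:ℝ)*π*α/2)]
      · rw [abs_of_nonneg (sq_nonneg _)]
        nlinarith [Real.neg_one_le_cos ((n:ℝ)*π*α/2), Real.cos_le_one ((n:ℝ)*π*α/2)]
    · rw [Set.indicator_of_notMem (by rw [Set.mem_Icc, ← abs_le]; exact h)]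
      rw [Real.norm_eq_abs, gnfun, if_neg h, abs_zero]

-- Part 6
lemma part6 (n : ℕ) (hn : 1 ≤ n) (k : ℤ) : gnhat n ((k:ℝ)/2) =
    if k = 0 then 1
    else if k = (n:ℤ) ∨ k = -(n:ℤ) then (-1 : ℝ)^(n+1) / 2
    else 0 := by
  by_cases hk0 : k = 0
  · subst hk0; simp [gnhat]
  have hk0' : ((k:ℝ)/2) ≠ 0 := by
    simp only [ne_eq, div_eq_zero_iff]
    push_neg
    exact ⟨by exact_mod_cast hk0, by norm_num⟩
  by_cases hkn : k = (n:ℤ) ∨ k = -(n:ℤ)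
  · rw [if_neg hk0, if_pos hkn, gnhat, if_neg hk0', if_pos ?_]
    rcases hkn with h | h
    · left; rw [h]; norm_num
    · right; rw [h]; push_cast; ring
  · rw [if_neg hk0, if_neg hkn, gnhat, if_neg hk0', if_neg ?_, show (2*π*((k:ℝ)/2)) = (k:ℝ)*π by ring,
      Real.sin_int_mul_pi]
    · simp
    · push_neg at hkn ⊢
      constructor
      · intro h
        apply hkn.1
        have : (k:ℝ) = (n:ℝ) := by linarith [h]
        exact_mod_cast this
      · intro h
        apply hkn.2
        have : (k:ℝ) = -(n:ℝ) := by linarith [h]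
        exact_mod_cast this

lemma gnhat_abs (n : ℕ) (t : ℝ) (ht0 : t ≠ 0) (htp : t ≠ (n:ℝ)/2) (htm : t ≠ -((n:ℝ)/2)) :
    |gnhat n t| = |Real.sin (2*π*t)| / (2*π*|t|) * ((n:ℝ)^2 / |(n:ℝ)^2 - 4*t^2|) := by
  rw [gnhat, if_neg ht0, if_neg (by push_neg; exact ⟨htp, htm⟩), abs_mul, abs_div, abs_div]
  congr 2
  · rw [abs_mul, abs_mul, abs_of_pos Real.pi_pos]
    norm_num
  · rw [abs_pow, Nat.abs_cast]

lemma pi_ge_one : (1:ℝ) ≤ π := by linarith [Real.pi_gt_three]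

-- Regime 1
lemma bound1 (n : ℕ) (hn : 1 ≤ n) (t : ℝ) (h : |t| ≤ (n:ℝ)/4) :
    |gnhat n t| ≤ 3 / (|t| + 1) := by
  have hnR : (1:ℝ) ≤ n := by exact_mod_cast hn
  by_cases ht0 : t = 0
  · subst ht0; rw [gnhat, if_pos rfl]; norm_num
  have ht0' : 0 < |t| := abs_pos.mpr ht0
  have htp : t ≠ (n:ℝ)/2 := by
    intro he; rw [he] at h; rw [abs_of_pos (by linarith)] at h; linarith
  have htm : t ≠ -((n:ℝ)/2) := by
    intro he; rw [he, abs_neg, abs_of_pos (by linarith)] at h; linarith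
  rw [gnhat_abs n t ht0 htp htm]
  have ht2 : t^2 ≤ (n:ℝ)^2/16 := by
    have := sq_abs t; nlinarith [sq_nonneg (|t| - (n:ℝ)/4)]
  have hd : (3/4) * (n:ℝ)^2 ≤ (n:ℝ)^2 - 4*t^2 := by nlinarith
  have hdpos : (0:ℝ) < (n:ℝ)^2 - 4*t^2 := by nlinarith
  have hf2 : (n:ℝ)^2 / |(n:ℝ)^2 - 4*t^2| ≤ 4/3 := by
    rw [abs_of_pos hdpos, div_le_div_iff₀ hdpos (by norm_num)]
    nlinarith
  have hf1 : |Real.sin (2*π*t)| / (2*π*|t|) ≤ 2 / (|t| + 1) := by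
    have hden : (0:ℝ) < 2*π*|t| := by positivity
    rw [div_le_div_iff₀ hden (by positivity)]
    rcases le_or_gt (|t|) 1 with hle | hgt
    · have hs : |Real.sin (2*π*t)| ≤ 2*π*|t| := by
        calc |Real.sin (2*π*t)| ≤ |2*π*t| := Real.abs_sin_le_abs
          _ = 2*π*|t| := by rw [abs_mul, abs_of_pos (by positivity)]
      nlinarith
    · have hs : |Real.sin (2*π*t)| ≤ 1 := Real.abs_sin_le_one _
      nlinarith [Real.pi_gt_three, sq_nonneg (|t| - 1)]
  calc |Real.sin (2*π*t)| / (2*π*|t|) * ((n:ℝ)^2 / |(n:ℝ)^2 - 4*t^2|)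
      ≤ (2 / (|t| + 1)) * (4/3) := by
        apply mul_le_mul hf1 hf2 (by positivity) (by positivity)
    _ = (8/3) / (|t| + 1) := by ring
    _ ≤ 3 / (|t| + 1) :=
        div_le_div_of_nonneg_right (by norm_num) (by positivity) (c := |t|+1) |>.trans_eq rfl

lemma cos_nat_pi' (n : ℕ) : Real.cos (n * π) = (-1)^n := by
  simpa using Real.cos_nat_mul_pi_sub 0 n

lemma sin_shift1 (n : ℕ) (t : ℝ) : |Real.sin (2*π*t)| ≤ π * |(n:ℝ) - 2*t| := by
  calc |Real.sin (2*π*t)| = |Real.sin ((n:ℝ)*π - 2*π*t)| := by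
        rw [Real.sin_nat_mul_pi_sub, abs_neg, abs_mul, abs_pow, abs_neg, abs_one, one_pow, one_mul]
    _ ≤ |(n:ℝ)*π - 2*π*t| := Real.abs_sin_le_abs
    _ = π * |(n:ℝ) - 2*t| := by
        rw [show (n:ℝ)*π - 2*π*t = π*((n:ℝ) - 2*t) by ring, abs_mul, abs_of_pos Real.pi_pos]

lemma sin_shift2 (n : ℕ) (t : ℝ) : |Real.sin (2*π*t)| ≤ π * |(n:ℝ) + 2*t| := by
  calc |Real.sin (2*π*t)| = |Real.sin ((n:ℝ)*π + 2*π*t)| := by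
        rw [Real.sin_add, Real.sin_nat_mul_pi, cos_nat_pi', zero_mul, zero_add, abs_mul,
          abs_pow, abs_neg, abs_one, one_pow, one_mul]
    _ ≤ |(n:ℝ)*π + 2*π*t| := Real.abs_sin_le_abs
    _ = π * |(n:ℝ) + 2*t| := by
        rw [show (n:ℝ)*π + 2*π*t = π*((n:ℝ) + 2*t) by ring, abs_mul, abs_of_pos Real.pi_pos]

-- Regime 2
lemma bound2 (n : ℕ) (hn : 1 ≤ n) (t : ℝ) (h1 : (n:ℝ)/4 < |t|) (h2 : |t| < n) :
    |gnhat n t| ≤ 3 := by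
  have hnR : (1:ℝ) ≤ n := by exact_mod_cast hn
  have ht0 : t ≠ 0 := by
    intro he; rw [he, abs_zero] at h1; linarith
  have htabs : 0 < |t| := abs_pos.mpr ht0
  by_cases hsp : t = (n:ℝ)/2 ∨ t = -((n:ℝ)/2)
  · rw [gnhat, if_neg ht0, if_pos hsp, abs_div, abs_pow, abs_neg, abs_one, one_pow]
    norm_num
  push_neg at hsp
  have hdpos : 0 < |(n:ℝ)^2 - 4*t^2| := by
    apply abs_pos.mpr
    intro he
    have : ((n:ℝ) - 2*t) * ((n:ℝ) + 2*t) = 0 := by nlinarith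
    rcases mul_eq_zero.mp this with h' | h'
    · exact hsp.1 (by linarith)
    · exact hsp.2 (by linarith)
  rw [gnhat_abs n t ht0 hsp.1 hsp.2, div_mul_div_comm, div_le_iff₀ (mul_pos (by positivity) hdpos)]
  rw [show (n:ℝ)^2 - 4*t^2 = ((n:ℝ) - 2*t) * ((n:ℝ) + 2*t) by ring, abs_mul]
  set m1 := |(n:ℝ) - 2*t| with hm1def
  set m2 := |(n:ℝ) + 2*t| with hm2def
  have hm1 : 0 ≤ m1 := abs_nonneg _
  have hm2 : 0 ≤ m2 := abs_nonneg _
  have hsum : 2*(n:ℝ) ≤ m1 + m2 := by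
    calc 2*(n:ℝ) = |((n:ℝ) - 2*t) + ((n:ℝ) + 2*t)| := by
          rw [show ((n:ℝ) - 2*t) + ((n:ℝ) + 2*t) = 2*(n:ℝ) by ring, abs_of_pos (by linarith)]
      _ ≤ m1 + m2 := abs_add_le _ _
  rcases le_total m1 m2 with hc | hc
  · have hM : (n:ℝ) ≤ m2 := by linarith
    have hk : (n:ℝ)^2 ≤ 4*|t| * m2 := by
      nlinarith [mul_nonneg (sub_nonneg.2 (le_of_lt (by linarith : (n:ℝ) < 4*|t|))) (sub_nonneg.2 hM)]
    calc |Real.sin (2*π*t)| * (n:ℝ)^2 ≤ (π * m1) * (n:ℝ)^2 :=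
          mul_le_mul_of_nonneg_right (sin_shift1 n t) (sq_nonneg _)
      _ ≤ 3 * (2*π*|t| * (m1 * m2)) := by
          nlinarith [mul_le_mul_of_nonneg_left hk (mul_nonneg Real.pi_pos.le hm1),
            mul_nonneg (mul_nonneg Real.pi_pos.le htabs.le) (mul_nonneg hm1 hm2)]
  · have hM : (n:ℝ) ≤ m1 := by linarith
    have hk : (n:ℝ)^2 ≤ 4*|t| * m1 := by
      nlinarith [mul_nonneg (sub_nonneg.2 (le_of_lt (by linarith : (n:ℝ) < 4*|t|))) (sub_nonneg.2 hM)]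
    calc |Real.sin (2*π*t)| * (n:ℝ)^2 ≤ (π * m2) * (n:ℝ)^2 :=
          mul_le_mul_of_nonneg_right (sin_shift2 n t) (sq_nonneg _)
      _ ≤ 3 * (2*π*|t| * (m1 * m2)) := by
          nlinarith [mul_le_mul_of_nonneg_left hk (mul_nonneg Real.pi_pos.le hm2),
            mul_nonneg (mul_nonneg Real.pi_pos.le htabs.le) (mul_nonneg hm1 hm2)]

-- Regime 3
lemma bound3 (n : ℕ) (hn : 1 ≤ n) (t : ℝ) (h : (n:ℝ) ≤ |t|) :
    |gnhat n t| ≤ 3 * (n:ℝ)^2 / |t|^3 := by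
  have hnR : (1:ℝ) ≤ n := by exact_mod_cast hn
  have ht1 : (1:ℝ) ≤ |t| := le_trans hnR h
  have htabs : 0 < |t| := by linarith
  have ht0 : t ≠ 0 := by simpa [abs_pos] using htabs
  have htp : t ≠ (n:ℝ)/2 := by
    intro he; rw [he, abs_of_pos (by linarith)] at h; linarith
  have htm : t ≠ -((n:ℝ)/2) := by
    intro he; rw [he, abs_neg, abs_of_pos (by linarith)] at h; linarith
  have hn2t2 : (n:ℝ)^2 ≤ t^2 := by nlinarith [sq_abs t]
  have hdpos : 0 < |(n:ℝ)^2 - 4*t^2| := abs_pos.mpr (by nlinarith)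
  have hd : 3*t^2 ≤ |(n:ℝ)^2 - 4*t^2| := by
    rw [abs_of_nonpos (by nlinarith)]
    nlinarith
  have hs : |Real.sin (2*π*t)| ≤ 1 := Real.abs_sin_le_one _
  have ht3 : |t|^3 = |t| * t^2 := by rw [pow_succ, sq_abs, pow_two]; ring
  rw [gnhat_abs n t ht0 htp htm, div_mul_div_comm,
    div_le_div_iff₀ (mul_pos (by positivity) hdpos) (by positivity), ht3]
  calc |Real.sin (2*π*t)| * (n:ℝ)^2 * (|t| * t^2)
      ≤ 1 * (n:ℝ)^2 * (|t| * t^2) := by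
        apply mul_le_mul_of_nonneg_right (mul_le_mul_of_nonneg_right hs (sq_nonneg _)) (by positivity)
    _ = (n:ℝ)^2 * (|t| * t^2) := by ring
    _ ≤ (n:ℝ)^2 * (|t| * (|(n:ℝ)^2 - 4*t^2|/3)) := by
        apply mul_le_mul_of_nonneg_left (mul_le_mul_of_nonneg_left (by linarith) (abs_nonneg t)) (sq_nonneg _)
    _ ≤ 3 * (n:ℝ)^2 * (2*π*|t| * |(n:ℝ)^2 - 4*t^2|) := by
        nlinarith [mul_nonneg (mul_nonneg (sq_nonneg (n:ℝ)) (abs_nonneg t)) (abs_nonneg ((n:ℝ)^2-4*t^2)),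
          Real.pi_gt_three]

lemma gnhat_le3 (n : ℕ) (hn : 1 ≤ n) (t : ℝ) (h : |t| ≤ (n:ℝ)) : |gnhat n t| ≤ 3 := by
  have hnR : (1:ℝ) ≤ n := by exact_mod_cast hn
  rcases le_or_gt (|t|) ((n:ℝ)/4) with h1 | h1
  · calc |gnhat n t| ≤ 3 / (|t| + 1) := bound1 n hn t h1
      _ ≤ 3 / 1 := by
        apply div_le_div_of_nonneg_left (by norm_num) (by norm_num) (by linarith [abs_nonneg t])
      _ = 3 := by norm_num
  rcases lt_or_ge (|t|) ((n:ℝ)) with h2 | h2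
  · exact bound2 n hn t h1 h2
  · have heq : |t| = (n:ℝ) := le_antisymm h h2
    calc |gnhat n t| ≤ 3 * (n:ℝ)^2 / |t|^3 := bound3 n hn t h2
      _ ≤ 3 := by
        rw [heq, div_le_iff₀ (by positivity)]
        nlinarith

lemma part5 (n : ℕ) (hn : 1 ≤ n) : Integrable (gnhat n) := by
  have hnR : (1:ℝ) ≤ n := by exact_mod_cast hn
  have hm : Measurable (gnhat n) := by
    unfold gnhat
    apply Measurable.ite measurableSet_eq measurable_const
    apply Measurable.ite (MeasurableSet.union measurableSet_eq measurableSet_eq) measurable_const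
    apply Measurable.mul
    · exact (Real.measurable_sin.comp (by fun_prop)).div (by fun_prop)
    · exact Measurable.div measurable_const (by fun_prop)
  apply Integrable.mono' (g := fun t => (6*(n:ℝ)^2 + 6) * (1 + t^2)⁻¹)
  · exact integrable_inv_one_add_sq.const_mul _
  · exact hm.aestronglyMeasurable
  · filter_upwards with t
    rw [Real.norm_eq_abs]
    have h1t : (0:ℝ) < 1 + t^2 := by positivity
    rcases le_or_gt (|t|) ((n:ℝ)) with h | h
    · calc |gnhat n t| ≤ 3 := gnhat_le3 n hn t h
        _ ≤ (6*(n:ℝ)^2 + 6) * (1 + t^2)⁻¹ := by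
          rw [← div_eq_mul_inv, le_div_iff₀ h1t]
          nlinarith [sq_abs t, mul_le_mul h h (abs_nonneg t) (by positivity : (0:ℝ) ≤ (n:ℝ))]
    · have h3 := bound3 n hn t h.le
      have ht1 : (1:ℝ) ≤ |t| := by linarith
      have habs2 : t^2 = |t|^2 := (sq_abs t).symm
      calc |gnhat n t| ≤ 3 * (n:ℝ)^2 / |t|^3 := h3
        _ ≤ (6*(n:ℝ)^2 + 6) * (1 + t^2)⁻¹ := by
          rw [← div_eq_mul_inv, div_le_div_iff₀ (by positivity) h1t]
          have e1 : (n:ℝ)^2 ≤ |t|^2 := by nlinarith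
          have e2 : |t|^2 ≤ |t|^3 := by nlinarith
          nlinarith [mul_le_mul_of_nonneg_left e2 (by positivity : (0:ℝ) ≤ 3*(n:ℝ)^2)]

/-- **Lemma 4.** For `n ≥ 1`, `g_n` is even and in `L¹(ℝ)`; its Fourier transform is
`ĝ_n(t) = (sin(2πt)/(2πt))(n²/(n²-4t²))`; one has `|ĝ_n(t)| ≪ 1/(|t|+1)` for
`|t| ≤ n/4`, `|ĝ_n(t)| ≪ 1` for `n/4 < |t| < n`, `|ĝ_n(t)| ≪ n²/|t|³` for `|t| ≥ n`;
hence `ĝ_n ∈ L¹(ℝ)`; and for integers `k`, `ĝ_n(k/2) = 1` if `k = 0`,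
`= (-1)^{n+1}/2` if `k = ±n`, and `= 0` otherwise. -/
theorem gn_fourier_pair (n : ℕ) (hn : 1 ≤ n) :
    (∀ α : ℝ, gnfun n (-α) = gnfun n α) ∧
    Integrable (gnfun n) ∧
    (∀ t : ℝ,
      (∫ α : ℝ, (gnfun n α : ℂ) * Complex.exp (-2 * π * Complex.I * t * α))
        = ((gnhat n t : ℝ) : ℂ)) ∧
    (∃ C : ℝ, 0 < C ∧ ∀ t : ℝ,
      (|t| ≤ (n:ℝ)/4 → |gnhat n t| ≤ C / (|t| + 1)) ∧
      ((n:ℝ)/4 < |t| → |t| < (n:ℝ) → |gnhat n t| ≤ C) ∧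
      ((n:ℝ) ≤ |t| → |gnhat n t| ≤ C * (n:ℝ)^2 / |t|^3)) ∧
    Integrable (gnhat n) ∧
    (∀ k : ℤ, gnhat n ((k:ℝ)/2) =
      if k = 0 then 1
      else if k = (n:ℤ) ∨ k = -(n:ℤ) then (-1 : ℝ)^(n+1) / 2
      else 0) := by
  exact ⟨part1 n, part2 n, main3 n hn,
    ⟨3, by norm_num, fun t => ⟨fun h => bound1 n hn t h,
      fun h1 h2 => bound2 n hn t h1 h2, fun h => bound3 n hn t h⟩⟩,
    part5 n hn, part6 n hn⟩

end
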